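/- Let a > 0, z > 0, σ ≥ 0, λ = a/z², and assume z² > σ and a + 1/2 > λσ. Let g : (0, ∞) → ℝ be measurable with |g(s)| ≤ C·[ (s/λ)^{−λ} e^{s−λ} ]^{σ} for all s > 0, where C ≥ 0. Then | (z^{2a+1}/Γ(a + 1/2))·∫₀^∞ s^{a−1/2} e^{−z²s} g(s) ds | ≤ C · a^{λσ} e^{−λσ} (1 − σ/z²)^{λσ − a − 1/2} · Γ(a + 1/2 − λσ)/Γ(a + 1/2). -/

import Mathlib

open Real Set MeasureTheory

theorem stmt_16 (a z σ lam C : ℝ) (ha : 0 < a) (hz : 0 < z) (hσ : 0 ≤ σ)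
    (hlam : lam = a / z ^ 2) (hzσ : σ < z ^ 2) (haσ : lam * σ < a + 1 / 2)
    (hC : 0 ≤ C) (g : ℝ → ℝ) (hg_meas : Measurable g)
    (hg_bound : ∀ s : ℝ, 0 < s →
      |g s| ≤ C * ((s / lam) ^ (-lam) * Real.exp (s - lam)) ^ σ) :
    |(z ^ (2 * a + 1) / Real.Gamma (a + 1 / 2)) *
        ∫ s in Set.Ioi (0 : ℝ), s ^ (a - 1 / 2) * Real.exp (-z ^ 2 * s) * g s| ≤
      C * a ^ (lam * σ) * Real.exp (-(lam * σ)) * (1 - σ / z ^ 2) ^ (lam * σ - a - 1 / 2) *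
        (Real.Gamma (a + 1 / 2 - lam * σ) / Real.Gamma (a + 1 / 2)) := by
  have hz2 : (0:ℝ) < z ^ 2 := by positivity
  have hlam_pos : 0 < lam := by rw [hlam]; positivity
  have hb : (0:ℝ) < z ^ 2 - σ := by linarith
  set p := a + 1 / 2 - lam * σ with hp
  have hp_pos : 0 < p := by rw [hp]; linarith
  have hGpos : 0 < Real.Gamma (a + 1 / 2) := Real.Gamma_pos_of_pos (by linarith)
  have hone : (0:ℝ) < 1 - σ / z ^ 2 := by
    rw [sub_pos, div_lt_one hz2]; exact hzσ
  set K := C * lam ^ (lam * σ) * Real.exp (-(lam * σ)) with hK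
  have hK0 : 0 ≤ K := by positivity
  -- pointwise bound
  have hbound : ∀ s ∈ Ioi (0:ℝ), |s ^ (a - 1 / 2) * Real.exp (-z ^ 2 * s) * g s| ≤
      K * (s ^ (p - 1) * Real.exp (-((z ^ 2 - σ) * s))) := by
    intro s hs
    rw [mem_Ioi] at hs
    have h1 : |s ^ (a - 1 / 2) * Real.exp (-z ^ 2 * s) * g s|
        = s ^ (a - 1 / 2) * Real.exp (-z ^ 2 * s) * |g s| := by
      rw [abs_mul, abs_mul, abs_of_nonneg (Real.rpow_nonneg hs.le _),
        abs_of_nonneg (Real.exp_pos _).le]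
    rw [h1]
    have h2 : s ^ (a - 1 / 2) * Real.exp (-z ^ 2 * s) * |g s|
        ≤ s ^ (a - 1 / 2) * Real.exp (-z ^ 2 * s) *
          (C * ((s / lam) ^ (-lam) * Real.exp (s - lam)) ^ σ) :=
      mul_le_mul_of_nonneg_left (hg_bound s hs) (by positivity)
    refine h2.trans_eq ?_
    have e1 : ((s / lam) ^ (-lam) * Real.exp (s - lam)) ^ σ
        = s ^ (-(lam * σ)) * lam ^ (lam * σ) * Real.exp ((s - lam) * σ) := by
      rw [Real.mul_rpow (Real.rpow_nonneg (by positivity) _) (Real.exp_pos _).le,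
        ← Real.rpow_mul (by positivity : (0:ℝ) ≤ s / lam), neg_mul,
        Real.div_rpow hs.le hlam_pos.le, Real.rpow_neg hlam_pos.le, div_eq_mul_inv, inv_inv,
        ← Real.exp_mul]
    have e2 : s ^ (p - 1) = s ^ (a - 1 / 2) * s ^ (-(lam * σ)) := by
      rw [← Real.rpow_add hs]; congr 1; rw [hp]; ring
    have e3 : Real.exp (-z ^ 2 * s) * Real.exp ((s - lam) * σ)
        = Real.exp (-(lam * σ)) * Real.exp (-((z ^ 2 - σ) * s)) := by
      rw [← Real.exp_add, ← Real.exp_add]; ring_nf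
    rw [e1, hK, e2]
    linear_combination (C * lam ^ (lam * σ) * s ^ (a - 1 / 2) * s ^ (-(lam * σ))) * e3
  -- integrability of the bound
  have hint : IntegrableOn (fun s : ℝ =>
      K * (s ^ (p - 1) * Real.exp (-((z ^ 2 - σ) * s)))) (Ioi 0) := by
    apply Integrable.const_mul
    have h := integrableOn_rpow_mul_exp_neg_mul_rpow
      (show (-1:ℝ) < p - 1 by linarith) (show (0:ℝ) < 1 from one_pos) hb
    refine h.congr_fun (fun x hx => ?_) measurableSet_Ioi
    beta_reduce
    rw [Real.rpow_one, neg_mul]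
  -- bound the integral
  have key : |∫ s in Ioi (0:ℝ), s ^ (a - 1 / 2) * Real.exp (-z ^ 2 * s) * g s|
      ≤ K * ((1 / (z ^ 2 - σ)) ^ p * Real.Gamma p) := by
    have step1 : |∫ s in Ioi (0:ℝ), s ^ (a - 1 / 2) * Real.exp (-z ^ 2 * s) * g s|
        ≤ ∫ s in Ioi (0:ℝ), |s ^ (a - 1 / 2) * Real.exp (-z ^ 2 * s) * g s| := by
      rw [← Real.norm_eq_abs]
      refine (norm_integral_le_integral_norm _).trans_eq ?_
      simp only [Real.norm_eq_abs]
    have step2 : (∫ s in Ioi (0:ℝ), |s ^ (a - 1 / 2) * Real.exp (-z ^ 2 * s) * g s|)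
        ≤ ∫ s in Ioi (0:ℝ), K * (s ^ (p - 1) * Real.exp (-((z ^ 2 - σ) * s))) := by
      refine integral_mono_of_nonneg (Filter.Eventually.of_forall fun s => abs_nonneg _)
        hint ?_
      exact (ae_restrict_iff' measurableSet_Ioi).2 (Filter.Eventually.of_forall hbound)
    have step3 : (∫ s in Ioi (0:ℝ), K * (s ^ (p - 1) * Real.exp (-((z ^ 2 - σ) * s))))
        = K * ((1 / (z ^ 2 - σ)) ^ p * Real.Gamma p) := by
      rw [MeasureTheory.integral_const_mul,
        Real.integral_rpow_mul_exp_neg_mul_Ioi hp_pos hb]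
    exact (step1.trans step2).trans_eq step3
  -- assemble
  have hX0 : 0 ≤ z ^ (2 * a + 1) / Real.Gamma (a + 1 / 2) :=
    div_nonneg (Real.rpow_nonneg hz.le _) hGpos.le
  rw [abs_mul, abs_of_nonneg hX0]
  refine (mul_le_mul_of_nonneg_left key hX0).trans_eq ?_
  -- final algebraic identity
  have h1 : (z ^ 2 : ℝ) ^ (a + 1 / 2) = z ^ (2 * a + 1) := by
    rw [← Real.rpow_natCast z 2, ← Real.rpow_mul hz.le]
    congr 1; push_cast; ring
  have h2 : (1 / (z ^ 2 - σ)) ^ p = (z ^ 2 : ℝ) ^ (-p) * (1 - σ / z ^ 2) ^ (-p) := by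
    have hb_eq : z ^ 2 - σ = z ^ 2 * (1 - σ / z ^ 2) := by field_simp
    rw [one_div, Real.inv_rpow hb.le, ← Real.rpow_neg hb.le, hb_eq,
      Real.mul_rpow hz2.le hone.le]
  have h5 : (z ^ 2 : ℝ) ^ (a + 1 / 2) * ((z ^ 2 : ℝ) ^ (-p) * lam ^ (lam * σ))
      = a ^ (lam * σ) := by
    rw [← mul_assoc, ← Real.rpow_add hz2,
      show a + 1 / 2 + -p = lam * σ from by rw [hp]; ring,
      ← Real.mul_rpow hz2.le hlam_pos.le]
    congr 1
    rw [hlam]; field_simp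
  have hnp : lam * σ - a - 1 / 2 = -p := by rw [hp]; ring
  rw [hnp, ← h1, h2, hK]
  linear_combination (C * Real.exp (-(lam * σ)) * (1 - σ / z ^ 2) ^ (-p) *
    Real.Gamma p / Real.Gamma (a + 1 / 2)) * h5
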